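/- Let E be a real normed vector space, L' ≥ 1, G : E → E Lipschitz with constant L', U∞ ∈ E with G(U∞) = 0, and let t > 0 and ε satisfy 0 < ε ≤ t². Define T_ε : E → E by T_ε(U) = U + ε·G(U) and set n = ⌊t/ε⌋. Then for every U ∈ E, ‖(T_ε)^n(U) − (U + t·G(U))‖ ≤ 2·t²·L'²·exp(t·L')·‖U − U∞‖. -/

import Mathlib

set_option maxHeartbeats 1600000

/-- The `n = ⌊t/ε⌋` iterated small reaction steps differ from the single large step
`U + t G(U)` by at most `2 t² L'² e^{t L'} ‖U − Uinf‖`. -/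
theorem iterate_euler_step_vs_time_t_step
    {E : Type*} [NormedAddCommGroup E] [NormedSpace ℝ E]
    (L' : ℝ) (hL' : 1 ≤ L')
    (G : E → E) (hG : ∀ U V : E, ‖G U - G V‖ ≤ L' * ‖U - V‖)
    (Uinf : E) (hUinf : G Uinf = 0)
    (t ε : ℝ) (ht : 0 < t) (hε : 0 < ε) (hεt : ε ≤ t ^ 2)
    (T : E → E) (hT : ∀ U : E, T U = U + ε • G U)
    (n : ℕ) (hn : n = ⌊t / ε⌋₊) :
    ∀ U : E,
      ‖T^[n] U - (U + t • G U)‖ ≤ 2 * t ^ 2 * L' ^ 2 * Real.exp (t * L') * ‖U - Uinf‖ := by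
  intro U
  have hexp1 : (1:ℝ) ≤ Real.exp (t * L') := Real.one_le_exp (by positivity)
  have hε0 : (0:ℝ) ≤ ε := hε.le
  set M := ‖U - Uinf‖ with hMdef
  have hM0 : 0 ≤ M := norm_nonneg _
  have hL0 : (0:ℝ) ≤ L' := le_trans zero_le_one hL'
  have hGnorm : ∀ W : E, ‖G W‖ ≤ L' * ‖W - Uinf‖ := fun W => by
    simpa [hUinf] using hG W Uinf
  -- n * ε ≤ t
  have hnε : (n:ℝ) * ε ≤ t := by
    have h := Nat.floor_le (show (0:ℝ) ≤ t/ε by positivity)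
    rw [hn]
    calc (⌊t/ε⌋₊:ℝ) * ε ≤ (t/ε) * ε := mul_le_mul_of_nonneg_right h hε0
      _ = t := by field_simp
  -- t ≤ n*ε + ε
  have htn : t ≤ (n:ℝ) * ε + ε := by
    have h := Nat.lt_floor_add_one (t/ε)
    rw [hn]
    have h2 := (div_lt_iff₀ hε).mp h
    nlinarith
  -- growth of distance to equilibrium
  have key : ∀ k, ‖T^[k] U - Uinf‖ ≤ (1+ε*L')^k * M := by
    intro k
    induction k with
    | zero => simp [hMdef]
    | succ k ih =>
      rw [Function.iterate_succ_apply', hT]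
      have h1 : ‖T^[k] U + ε • G (T^[k] U) - Uinf‖
          ≤ ‖T^[k] U - Uinf‖ + ε * ‖G (T^[k] U)‖ := by
        calc ‖T^[k] U + ε • G (T^[k] U) - Uinf‖
            = ‖(T^[k] U - Uinf) + ε • G (T^[k] U)‖ := by
              congr 1; abel
          _ ≤ ‖T^[k] U - Uinf‖ + ‖ε • G (T^[k] U)‖ := norm_add_le _ _
          _ = ‖T^[k] U - Uinf‖ + ε * ‖G (T^[k] U)‖ := by
              rw [norm_smul, Real.norm_eq_abs, abs_of_nonneg hε0]
      have h2 := hGnorm (T^[k] U)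
      have hpow : (0:ℝ) ≤ (1+ε*L')^k := by positivity
      have hnn : (0:ℝ) ≤ ‖T^[k] U - Uinf‖ := norm_nonneg _
      calc ‖T^[k] U + ε • G (T^[k] U) - Uinf‖
          ≤ ‖T^[k] U - Uinf‖ + ε * (L' * ‖T^[k] U - Uinf‖) := by nlinarith
        _ = (1+ε*L') * ‖T^[k] U - Uinf‖ := by ring
        _ ≤ (1+ε*L') * ((1+ε*L')^k * M) :=
            mul_le_mul_of_nonneg_left ih (by positivity)
        _ = (1+ε*L')^(k+1) * M := by ring
  have keyexp : ∀ k, k ≤ n → ‖T^[k] U - Uinf‖ ≤ Real.exp (t*L') * M := by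
    intro k hk
    refine le_trans (key k) ?_
    have h1 : (1+ε*L')^k ≤ (Real.exp (ε*L'))^k :=
      pow_le_pow_left₀ (by positivity) (by linarith [Real.add_one_le_exp (ε*L')]) k
    have h2 : (Real.exp (ε*L'))^k = Real.exp ((k:ℝ)*(ε*L')) :=
      (Real.exp_nat_mul _ k).symm
    have hkε : (k:ℝ)*ε ≤ t := by
      have hkn : (k:ℝ) ≤ (n:ℝ) := by exact_mod_cast hk
      nlinarith
    have h3 : Real.exp ((k:ℝ)*(ε*L')) ≤ Real.exp (t*L') := by
      apply Real.exp_le_exp.mpr; nlinarith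
    have h4 : (1+ε*L')^k ≤ Real.exp (t*L') := by
      rw [h2] at h1; linarith
    exact mul_le_mul_of_nonneg_right h4 hM0
  -- distance travelled from U
  have keyU : ∀ k, k ≤ n → ‖T^[k] U - U‖ ≤ (k:ℝ)*ε*L'*Real.exp (t*L')*M := by
    intro k
    induction k with
    | zero => intro _; simp
    | succ k ih =>
      intro hk
      have hk' : k ≤ n := Nat.le_of_succ_le hk
      have ih' := ih hk'
      rw [Function.iterate_succ_apply', hT]
      have h1 : ‖T^[k] U + ε • G (T^[k] U) - U‖
          ≤ ‖T^[k] U - U‖ + ε * ‖G (T^[k] U)‖ := by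
        calc ‖T^[k] U + ε • G (T^[k] U) - U‖
            = ‖(T^[k] U - U) + ε • G (T^[k] U)‖ := by congr 1; abel
          _ ≤ ‖T^[k] U - U‖ + ‖ε • G (T^[k] U)‖ := norm_add_le _ _
          _ = ‖T^[k] U - U‖ + ε * ‖G (T^[k] U)‖ := by
              rw [norm_smul, Real.norm_eq_abs, abs_of_nonneg hε0]
      have h2 := hGnorm (T^[k] U)
      have h3 := keyexp k hk'
      have h4 : ε * ‖G (T^[k] U)‖ ≤ ε * (L' * ‖T^[k] U - Uinf‖) :=
        mul_le_mul_of_nonneg_left h2 hε0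
      have h5 : ε * L' * ‖T^[k] U - Uinf‖ ≤ ε * L' * (Real.exp (t*L') * M) :=
        mul_le_mul_of_nonneg_left h3 (by positivity)
      push_cast
      nlinarith
  -- main comparison with U + (k ε) • G U
  have keyD : ∀ k, k ≤ n →
      ‖T^[k] U - (U + ((k:ℝ)*ε) • G U)‖ ≤ (k:ℝ)*ε*(L'^2*t*Real.exp (t*L')*M) := by
    intro k
    induction k with
    | zero => intro _; simp
    | succ k ih =>
      intro hk
      have hk' : k ≤ n := Nat.le_of_succ_le hk
      have ih' := ih hk'
      rw [Function.iterate_succ_apply', hT]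
      have hkε : (k:ℝ)*ε ≤ t := by
        have hkn : (k:ℝ) ≤ (n:ℝ) := by exact_mod_cast hk'
        nlinarith
      have heq : T^[k] U + ε • G (T^[k] U) - (U + (((k:ℝ)+1)*ε) • G U)
          = (T^[k] U - (U + ((k:ℝ)*ε) • G U)) + ε • (G (T^[k] U) - G U) := by
        rw [add_mul, one_mul, add_smul, smul_sub]
        abel
      push_cast
      rw [heq]
      have h1 := norm_add_le (T^[k] U - (U + ((k:ℝ)*ε) • G U)) (ε • (G (T^[k] U) - G U))
      have h2 : ‖ε • (G (T^[k] U) - G U)‖ ≤ ε * (L' * ‖T^[k] U - U‖) := by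
        rw [norm_smul, Real.norm_eq_abs, abs_of_nonneg hε0]
        exact mul_le_mul_of_nonneg_left (hG _ U) hε0
      have h4 := keyU k hk'
      have h5 : ε * (L' * ‖T^[k] U - U‖) ≤ ε * (L' * ((k:ℝ)*ε*L'*Real.exp (t*L')*M)) :=
        mul_le_mul_of_nonneg_left (mul_le_mul_of_nonneg_left h4 hL0) hε0
      have h6 : ε * (L' * ((k:ℝ)*ε*L'*Real.exp (t*L')*M)) ≤ ε * (L'^2*t*Real.exp (t*L')*M) := by
        have hh := mul_le_mul_of_nonneg_left hkε
          (show (0:ℝ) ≤ ε * (L'^2 * Real.exp (t*L') * M) by positivity)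
        nlinarith [hh]
      have hgoal : ((k:ℝ)+1)*ε*(L'^2*t*Real.exp (t*L')*M)
          = (k:ℝ)*ε*(L'^2*t*Real.exp (t*L')*M) + ε*(L'^2*t*Real.exp (t*L')*M) := by ring
      rw [hgoal]
      linarith
  -- conclude
  have hDn := keyD n le_rfl
  have hfinal : T^[n] U - (U + t • G U)
      = (T^[n] U - (U + ((n:ℝ)*ε) • G U)) + ((n:ℝ)*ε - t) • G U := by
    rw [sub_smul]; abel
  have h1 := norm_add_le (T^[n] U - (U + ((n:ℝ)*ε) • G U)) (((n:ℝ)*ε - t) • G U)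
  have h2 : ‖((n:ℝ)*ε - t) • G U‖ = (t - (n:ℝ)*ε) * ‖G U‖ := by
    rw [norm_smul, Real.norm_eq_abs, abs_of_nonpos (by linarith), neg_sub]
  have h3 := hGnorm U
  have hGU0 : (0:ℝ) ≤ ‖G U‖ := norm_nonneg _
  have h4 : (t - (n:ℝ)*ε) * ‖G U‖ ≤ ε * (L' * M) :=
    mul_le_mul (by linarith) h3 hGU0 hε0
  have h5 : (n:ℝ)*ε*(L'^2*t*Real.exp (t*L')*M) ≤ t^2*L'^2*Real.exp (t*L')*M := by
    have hh := mul_le_mul_of_nonneg_right hnε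
      (show (0:ℝ) ≤ t * (L'^2 * Real.exp (t*L') * M) by positivity)
    nlinarith [hh]
  have h6 : ε * (L' * M) ≤ t^2 * L'^2 * Real.exp (t*L') * M := by
    have hA : ε * (L' * M) ≤ t^2 * (L' * M) :=
      mul_le_mul_of_nonneg_right hεt (by positivity)
    have hB : (1:ℝ) ≤ L' * Real.exp (t*L') := by nlinarith
    have hC := mul_le_mul_of_nonneg_left hB (show (0:ℝ) ≤ t^2 * L' * M by positivity)
    nlinarith [hC]
  rw [hfinal]
  calc ‖(T^[n] U - (U + ((n:ℝ)*ε) • G U)) + ((n:ℝ)*ε - t) • G U‖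
      ≤ ‖T^[n] U - (U + ((n:ℝ)*ε) • G U)‖ + ‖((n:ℝ)*ε - t) • G U‖ := h1
    _ ≤ t^2*L'^2*Real.exp (t*L')*M + t^2*L'^2*Real.exp (t*L')*M := by
        rw [h2]; linarith
    _ = 2 * t ^ 2 * L' ^ 2 * Real.exp (t * L') * M := by ring
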